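/- arXiv:2410.09458 — 3 statements merged into one kernel-verified Lean document; each statement's English description precedes it below -/
import Mathlib

section
/- Let m ≥ 3 and i ∈ {2, …, m−1}. Let v_1, …, v_{m+2} ∈ ℂ^m satisfy det(v_1, v_2, …, v_m) = 1 and det(v_2, v_3, …, v_{m+1}) = 1. Then det(v_2, …, v_m, v_{m+2}) · det(v_1, …, v_i, v_{i+2}, …, v_{m+1}) − det(v_2, …, v_i, v_{i+2}, …, v_{m+2}) = det(v_1, …, v_i, v_{i+2}, …, v_m, v_{m+2}), where in each determinant the columns are the vectors indexed, in increasing order, by the sets {2,…,m}∪{m+2}, {1,…,i}∪{i+2,…,m+1}, {2,…,i}∪{i+2,…,m+2}, and {1,…,i}∪{i+2,…,m}∪{m+2}, respectively. -/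
/-- The determinant of the `m × m` matrix whose columns are `u 0, …, u (m-1)`. -/
noncomputable def cdet {m : ℕ} (u : Fin m → Fin m → ℂ) : ℂ :=
  (Matrix.of fun i j => u j i).det

open Matrix

lemma cdet_eq_alt {m : ℕ} (u : Fin m → Fin m → ℂ) :
    cdet u = Matrix.detRowAlternating u := by
  calc cdet u = ((Matrix.of u)ᵀ).det := rfl
    _ = (Matrix.of u).det := Matrix.det_transpose _
    _ = Matrix.detRowAlternating u := rfl

/-- The cycle fixing `t < p`, sending `t ↦ t+1` for `p ≤ t < n`, and `n ↦ p`. -/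
def sigRot {m : ℕ} (p : Fin m) : Equiv.Perm (Fin m) :=
  Fin.revPerm * (Fin.cycleRange p.rev)⁻¹ * Fin.revPerm

lemma sigRot_coe {n : ℕ} (p t : Fin (n + 1)) :
    ((sigRot p t : Fin (n + 1)) : ℕ)
      = if (t : ℕ) < (p : ℕ) then (t : ℕ)
        else if (t : ℕ) < n then (t : ℕ) + 1 else (p : ℕ) := by
  have ht := t.isLt
  have hp := p.isLt
  simp only [sigRot, Equiv.Perm.mul_apply, Fin.revPerm_apply]
  split_ifs with h1 h2
  · have hgt : p.rev < t.rev := Fin.rev_lt_rev.mpr (Fin.lt_def.mpr h1)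
    have he : (Fin.cycleRange p.rev)⁻¹ t.rev = t.rev :=
      Equiv.Perm.inv_eq_iff_eq.mpr (Fin.cycleRange_of_gt hgt).symm
    rw [he, Fin.rev_rev]
  · set s : Fin (n + 1) := ⟨(t : ℕ) + 1, by omega⟩ with hs
    have hlt : s.rev < p.rev := by
      rw [Fin.lt_def, Fin.val_rev, Fin.val_rev, hs]; simp; omega
    have h4 : Fin.cycleRange p.rev s.rev = t.rev := by
      apply Fin.ext
      rw [Fin.coe_cycleRange_of_lt hlt, Fin.val_rev, Fin.val_rev, hs]; simp; omega
    have he : (Fin.cycleRange p.rev)⁻¹ t.rev = s.rev :=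
      Equiv.Perm.inv_eq_iff_eq.mpr h4.symm
    rw [he, Fin.rev_rev, hs]
  · have hlast : t = Fin.last n := Fin.ext (by simpa using by omega)
    have he : (Fin.cycleRange p.rev)⁻¹ t.rev = p.rev := by
      rw [hlast, Fin.rev_last]
      exact Equiv.Perm.inv_eq_iff_eq.mpr (Fin.cycleRange_self p.rev).symm
    rw [he, Fin.rev_rev]

lemma sign_sigRot {n : ℕ} (p : Fin (n + 1)) :
    Equiv.Perm.sign (sigRot p) = (-1) ^ (n - (p : ℕ)) := by
  have hval : ((p.rev : Fin (n + 1)) : ℕ) = n - (p : ℕ) := by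
    rw [Fin.val_rev]; omega
  simp only [sigRot, _root_.map_mul, Equiv.Perm.sign_inv, Fin.sign_cycleRange, hval]
  rw [mul_comm (Equiv.Perm.sign Fin.revPerm) _, mul_assoc, Int.units_mul_self, mul_one]

lemma rotf {n : ℕ} (u : Fin (n + 1) → Fin (n + 1) → ℂ) (p : Fin (n + 1)) :
    Matrix.detRowAlternating (fun t => u (sigRot p t))
      = (-1 : ℂ) ^ (n - (p : ℕ)) * Matrix.detRowAlternating u := by
  have h := (Matrix.detRowAlternating (R := ℂ) (n := Fin (n + 1))).map_perm u (sigRot p)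
  rw [sign_sigRot] at h
  rw [show (fun t => u (sigRot p t)) = u ∘ (sigRot p) from rfl, h]
  simp [Units.smul_def, zsmul_eq_mul]

lemma expand_last {n : ℕ} (w : (Fin (n + 1) → ℂ) → Fin (n + 1) → Fin (n + 1) → ℂ)
    (hw : ∀ x y, Function.update (w y) (Fin.last n) x = w x)
    (c : Fin (n + 1) → ℂ) (e : Fin (n + 1) → Fin (n + 1) → ℂ) (x : Fin (n + 1) → ℂ)
    (hx : x = ∑ j, c j • e j) :
    Matrix.detRowAlternating (w x) = ∑ j, c j * Matrix.detRowAlternating (w (e j)) := by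
  conv_lhs => rw [← hw x x, hx]
  rw [AlternatingMap.map_update_sum]
  refine Finset.sum_congr rfl fun j _ => ?_
  rw [AlternatingMap.map_update_smul, hw, smul_eq_mul]

/-- Let `m ≥ 3`, `2 ≤ i ≤ m−1`, and `v_1, …, v_{m+2} ∈ ℂ^m` with
`det(v_1, …, v_m) = 1` and `det(v_2, …, v_{m+1}) = 1`.  Then
`det(v_2,…,v_m,v_{m+2}) · det(v_1,…,v_i,v_{i+2},…,v_{m+1}) − det(v_2,…,v_i,v_{i+2},…,v_{m+2})
  = det(v_1,…,v_i,v_{i+2},…,v_m,v_{m+2})`,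
where in each determinant the columns are indexed, in increasing order, by the sets
`{2,…,m}∪{m+2}`, `{1,…,i}∪{i+2,…,m+1}`, `{2,…,i}∪{i+2,…,m+2}` and
`{1,…,i}∪{i+2,…,m}∪{m+2}` respectively. -/
theorem stmt_10 (m : ℕ) (hm : 3 ≤ m) (i : ℕ) (hi1 : 2 ≤ i) (hi2 : i ≤ m - 1)
    (v : ℕ → Fin m → ℂ)
    (h1 : cdet (fun t : Fin m => v (1 + (t : ℕ))) = 1)
    (h2 : cdet (fun t : Fin m => v (2 + (t : ℕ))) = 1) :
    cdet (fun t : Fin m => v (if (t : ℕ) < m - 1 then (t : ℕ) + 2 else m + 2))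
      * cdet (fun t : Fin m => v (if (t : ℕ) < i then (t : ℕ) + 1 else (t : ℕ) + 2))
      - cdet (fun t : Fin m => v (if (t : ℕ) < i - 1 then (t : ℕ) + 2 else (t : ℕ) + 3))
      = cdet (fun t : Fin m => v (if (t : ℕ) < i then (t : ℕ) + 1
          else if (t : ℕ) < m - 1 then (t : ℕ) + 2 else m + 2)) := by
  obtain ⟨n, rfl⟩ : ∃ n, m = n + 1 := ⟨m - 1, by omega⟩
  have hn : 2 ≤ n := by omega
  have hin : i ≤ n := by omega
  simp only [Nat.add_sub_cancel] at hi2 ⊢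
  simp only [cdet_eq_alt] at h1 h2 ⊢
  set e : Fin (n + 1) → Fin (n + 1) → ℂ := fun t => v (1 + (t : ℕ)) with he
  set e' : Fin (n + 1) → Fin (n + 1) → ℂ := fun t => v (2 + (t : ℕ)) with he'
  set uB : Fin (n + 1) → Fin (n + 1) → ℂ :=
    fun t => v (if (t : ℕ) < i then (t : ℕ) + 1 else (t : ℕ) + 2) with huB
  set B : ℂ := Matrix.detRowAlternating uB with hB
  set wA : (Fin (n + 1) → ℂ) → Fin (n + 1) → Fin (n + 1) → ℂ :=
    fun x t => if (t : ℕ) < n then v ((t : ℕ) + 2) else x with hwA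
  set wC : (Fin (n + 1) → ℂ) → Fin (n + 1) → Fin (n + 1) → ℂ :=
    fun x t => if (t : ℕ) < i - 1 then v ((t : ℕ) + 2)
      else if (t : ℕ) < n then v ((t : ℕ) + 3) else x with hwC
  set wD : (Fin (n + 1) → ℂ) → Fin (n + 1) → Fin (n + 1) → ℂ :=
    fun x t => if (t : ℕ) < i then v ((t : ℕ) + 1)
      else if (t : ℕ) < n then v ((t : ℕ) + 2) else x with hwD
  have hgoalA : (fun t : Fin (n + 1) => v (if (t : ℕ) < n then (t : ℕ) + 2 else n + 1 + 2))
      = wA (v (n + 1 + 2)) := by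
    funext t; have ht := t.isLt
    simp only [hwA, apply_ite v]
  have hgoalC : (fun t : Fin (n + 1) => v (if (t : ℕ) < i - 1 then (t : ℕ) + 2 else (t : ℕ) + 3))
      = wC (v (n + 1 + 2)) := by
    funext t; have ht := t.isLt
    simp only [hwC, apply_ite v]
    split_ifs <;> first | rfl | omega | exact congrArg v (by omega)
  have hgoalD : (fun t : Fin (n + 1) => v (if (t : ℕ) < i then (t : ℕ) + 1
      else if (t : ℕ) < n then (t : ℕ) + 2 else n + 1 + 2)) = wD (v (n + 1 + 2)) := by
    funext t; have ht := t.isLt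
    simp only [hwD, apply_ite v]
  have hupdA : ∀ x y, Function.update (wA y) (Fin.last n) x = wA x := by
    intro x y; funext t
    rcases eq_or_ne t (Fin.last n) with rfl | h
    · simp only [Function.update_self, hwA, Fin.val_last]
      rw [if_neg (by omega : ¬ n < n)]
    · have htn : (t : ℕ) < n := by
        have h2 := t.isLt
        rcases Nat.lt_or_ge (t : ℕ) n with h' | h'
        · exact h'
        · exact absurd (Fin.ext (by simp; omega)) h
      simp [Function.update_of_ne h, hwA, htn]
  have hupdC : ∀ x y, Function.update (wC y) (Fin.last n) x = wC x := by
    intro x y; funext t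
    rcases eq_or_ne t (Fin.last n) with rfl | h
    · simp only [Function.update_self, hwC, Fin.val_last]
      rw [if_neg (by omega : ¬ n < i - 1), if_neg (by omega : ¬ n < n)]
    · have htn : (t : ℕ) < n := by
        have h2 := t.isLt
        rcases Nat.lt_or_ge (t : ℕ) n with h' | h'
        · exact h'
        · exact absurd (Fin.ext (by simp; omega)) h
      simp [Function.update_of_ne h, hwC, htn]
  have hupdD : ∀ x y, Function.update (wD y) (Fin.last n) x = wD x := by
    intro x y; funext t
    rcases eq_or_ne t (Fin.last n) with rfl | h
    · simp only [Function.update_self, hwD, Fin.val_last]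
      rw [if_neg (by omega : ¬ n < i), if_neg (by omega : ¬ n < n)]
    · have htn : (t : ℕ) < n := by
        have h2 := t.isLt
        rcases Nat.lt_or_ge (t : ℕ) n with h' | h'
        · exact h'
        · exact absurd (Fin.ext (by simp; omega)) h
      simp [Function.update_of_ne h, hwD, htn]
  -- basis expansion of v (m+2)
  set M : Matrix (Fin (n + 1)) (Fin (n + 1)) ℂ := (Matrix.of e)ᵀ with hM
  have hdet : M.det = 1 := by
    rw [hM, Matrix.det_transpose]; exact h1
  have hunit : IsUnit M.det := by rw [hdet]; exact isUnit_one
  set c : Fin (n + 1) → ℂ := M⁻¹.mulVec (v (n + 1 + 2)) with hc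
  have hexp : v (n + 1 + 2) = ∑ j, c j • e j := by
    have h0 : M.mulVec c = v (n + 1 + 2) := by
      rw [hc, Matrix.mulVec_mulVec, Matrix.mul_nonsing_inv _ hunit, Matrix.one_mulVec]
    rw [← h0]; funext r
    simp only [Matrix.mulVec, dotProduct, hM, Matrix.transpose_apply, Matrix.of_apply,
      Finset.sum_apply, Pi.smul_apply, smul_eq_mul]
    exact Finset.sum_congr rfl fun j _ => mul_comm _ _
  -- the key vanishing
  have hjzero : ∀ j : Fin (n + 1),
      Matrix.detRowAlternating (wA (e j)) * B - Matrix.detRowAlternating (wC (e j))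
        - Matrix.detRowAlternating (wD (e j)) = 0 := by
    intro j
    have hjn := j.isLt
    by_cases hj0 : (j : ℕ) = 0
    · -- j = 0
      have hA : wA (e j) = fun t => e (sigRot (0 : Fin (n + 1)) t) := by
        funext t; have ht := t.isLt
        simp only [hwA, he]
        rw [sigRot_coe]
        simp only [Fin.val_zero]
        split_ifs <;> first | rfl | omega | exact congrArg v (by omega)
      have hC : wC (e j) = fun t => uB (sigRot (0 : Fin (n + 1)) t) := by
        funext t; have ht := t.isLt
        simp only [hwC, he, huB]
        rw [sigRot_coe]
        simp only [Fin.val_zero, Nat.not_lt_zero, if_false]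
        split_ifs <;> first | rfl | omega | exact congrArg v (by omega)
      have hD : Matrix.detRowAlternating (wD (e j)) = 0 := by
        refine AlternatingMap.map_eq_zero_of_eq _ _
          (i := (0 : Fin (n + 1))) (j := Fin.last n) ?_ ?_
        · simp only [hwD, he, Fin.val_zero, Fin.val_last, show (0 : ℕ) < i by omega, if_true]
          split_ifs <;> first | rfl | omega | exact congrArg v (by omega)
        · simp only [ne_eq, Fin.ext_iff, Fin.val_zero, Fin.val_last]; omega
      have hArw := rotf e (0 : Fin (n + 1))
      rw [← hA] at hArw
      have hCrw := rotf uB (0 : Fin (n + 1))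
      rw [← hC] at hCrw
      simp only [Fin.val_zero, Nat.sub_zero] at hArw hCrw
      rw [hArw, hCrw, hD, h1, ← hB]
      ring
    · by_cases hji : (j : ℕ) = i
      · -- j = i
        have hA : Matrix.detRowAlternating (wA (e j)) = 0 := by
          refine AlternatingMap.map_eq_zero_of_eq _ _
            (i := (⟨i - 1, by omega⟩ : Fin (n + 1))) (j := Fin.last n) ?_ ?_
          · simp only [hwA, he, Fin.val_mk, Fin.val_last]
            split_ifs <;> first | rfl | omega | exact congrArg v (by omega)
          · simp only [ne_eq, Fin.ext_iff, Fin.val_mk, Fin.val_last]; omega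
        have hC : wC (e j) = fun t => e' (sigRot (⟨i - 1, by omega⟩ : Fin (n + 1)) t) := by
          funext t; have ht := t.isLt
          simp only [hwC, he, he']
          rw [sigRot_coe]
          simp only [Fin.val_mk]
          split_ifs <;> first | rfl | omega | exact congrArg v (by omega)
        have hD : wD (e j) = fun t => e (sigRot (⟨i, by omega⟩ : Fin (n + 1)) t) := by
          funext t; have ht := t.isLt
          simp only [hwD, he]
          rw [sigRot_coe]
          simp only [Fin.val_mk]
          split_ifs <;> first | rfl | omega | exact congrArg v (by omega)
        have hCrw := rotf e' (⟨i - 1, by omega⟩ : Fin (n + 1))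
        rw [← hC] at hCrw
        have hDrw := rotf e (⟨i, by omega⟩ : Fin (n + 1))
        rw [← hD] at hDrw
        simp only [Fin.val_mk] at hCrw hDrw
        rw [hA, hCrw, hDrw, h1, h2]
        have hpow : n - (i - 1) = (n - i) + 1 := by omega
        rw [hpow, pow_succ]
        ring
      · -- j ≠ 0, j ≠ i
        have hA : Matrix.detRowAlternating (wA (e j)) = 0 := by
          refine AlternatingMap.map_eq_zero_of_eq _ _
            (i := (⟨(j : ℕ) - 1, by omega⟩ : Fin (n + 1))) (j := Fin.last n) ?_ ?_
          · simp only [hwA, he, Fin.val_mk, Fin.val_last]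
            split_ifs <;> first | rfl | omega | exact congrArg v (by omega)
          · simp only [ne_eq, Fin.ext_iff, Fin.val_mk, Fin.val_last]; omega
        have hD : Matrix.detRowAlternating (wD (e j)) = 0 := by
          by_cases hjlt : (j : ℕ) < i
          · refine AlternatingMap.map_eq_zero_of_eq _ _
              (i := j) (j := Fin.last n) ?_ ?_
            · simp only [hwD, he, Fin.val_last]
              split_ifs <;> first | rfl | omega | exact congrArg v (by omega)
            · simp only [ne_eq, Fin.ext_iff, Fin.val_last]; omega
          · refine AlternatingMap.map_eq_zero_of_eq _ _
              (i := (⟨(j : ℕ) - 1, by omega⟩ : Fin (n + 1))) (j := Fin.last n) ?_ ?_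
            · simp only [hwD, he, Fin.val_mk, Fin.val_last]
              split_ifs <;> first | rfl | omega | exact congrArg v (by omega)
            · simp only [ne_eq, Fin.ext_iff, Fin.val_mk, Fin.val_last]; omega
        have hC : Matrix.detRowAlternating (wC (e j)) = 0 := by
          by_cases hjlt : (j : ℕ) < i
          · refine AlternatingMap.map_eq_zero_of_eq _ _
              (i := (⟨(j : ℕ) - 1, by omega⟩ : Fin (n + 1))) (j := Fin.last n) ?_ ?_
            · simp only [hwC, he, Fin.val_mk, Fin.val_last]
              split_ifs <;> first | rfl | omega | exact congrArg v (by omega)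
            · simp only [ne_eq, Fin.ext_iff, Fin.val_mk, Fin.val_last]; omega
          · refine AlternatingMap.map_eq_zero_of_eq _ _
              (i := (⟨(j : ℕ) - 2, by omega⟩ : Fin (n + 1))) (j := Fin.last n) ?_ ?_
            · simp only [hwC, he, Fin.val_mk, Fin.val_last]
              split_ifs <;> first | rfl | omega | exact congrArg v (by omega)
            · simp only [ne_eq, Fin.ext_iff, Fin.val_mk, Fin.val_last]; omega
        rw [hA, hC, hD]; ring
  rw [hgoalA, hgoalC, hgoalD]
  rw [expand_last wA hupdA c e _ hexp, expand_last wC hupdC c e _ hexp,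
    expand_last wD hupdD c e _ hexp]
  rw [← sub_eq_zero, Finset.sum_mul, ← Finset.sum_sub_distrib, ← Finset.sum_sub_distrib]
  exact Finset.sum_eq_zero fun j _ => by linear_combination (c j) * hjzero j
end

section
/- Let x = (x_k)_{k∈ℤ} ∈ B̂ with x_k = (a_k, b_k, c_k). Then for every k ∈ ℤ, (R_1(x))_k = (min(a_k, c_k), b_k + max(a_k − c_k, 0), b_{k−1} + max(c_{k−1} − a_{k−1}, 0)). -/
/-- A triple `(a, b, c) ∈ ℕ³`, identified with the multisegment `a[2] + b[1,2] + c[1]`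
of type `A₂`. -/
abbrev T3 := ℕ × ℕ × ℕ

/-- `f̃_1(a,b,c) := (a,b,c+1)` if `a ≤ c`, and `(a−1,b+1,c)` if `a > c`. -/
def ftil1 (x : T3) : T3 :=
  if x.1 ≤ x.2.2 then (x.1, x.2.1, x.2.2 + 1) else (x.1 - 1, x.2.1 + 1, x.2.2)

/-- `ẽ_1(a,b,c) := (a,b,c−1)` if `a < c`; `(a+1,b−1,c)` if `b > 0` and `a ≥ c`;
undefined if `b = 0` and `a ≥ c`. -/
def etil1 (x : T3) : Option T3 :=
  if x.1 < x.2.2 then some (x.1, x.2.1, x.2.2 - 1)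
  else if 0 < x.2.1 then some (x.1 + 1, x.2.1 - 1, x.2.2) else none

/-- `f̃_2(a,b,c) := (a+1,b,c)`. -/
def ftil2 (x : T3) : T3 := (x.1 + 1, x.2.1, x.2.2)

/-- `ẽ_2(a,b,c) := (a−1,b,c)` if `a > 0`, undefined if `a = 0`. -/
def etil2 (x : T3) : Option T3 :=
  if 0 < x.1 then some (x.1 - 1, x.2.1, x.2.2) else none

/-- `f̃*_1(a,b,c) := (a,b,c+1)`. -/
def fstar1 (x : T3) : T3 := (x.1, x.2.1, x.2.2 + 1)

/-- `ẽ*_1(a,b,c) := (a,b,c−1)` if `c > 0`, undefined if `c = 0`. -/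
def estar1 (x : T3) : Option T3 :=
  if 0 < x.2.2 then some (x.1, x.2.1, x.2.2 - 1) else none

/-- `f̃*_2(a,b,c) := (a+1,b,c)` if `a ≥ c`, and `(a,b+1,c−1)` if `a < c`. -/
def fstar2 (x : T3) : T3 :=
  if x.2.2 ≤ x.1 then (x.1 + 1, x.2.1, x.2.2) else (x.1, x.2.1 + 1, x.2.2 - 1)

/-- `ẽ*_2(a,b,c) := (a−1,b,c)` if `a > c`; `(a,b−1,c+1)` if `b > 0` and `a ≤ c`;
undefined if `b = 0` and `a ≤ c`. -/
def estar2 (x : T3) : Option T3 :=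
  if x.2.2 < x.1 then some (x.1 - 1, x.2.1, x.2.2)
  else if 0 < x.2.1 then some (x.1, x.2.1 - 1, x.2.2 + 1) else none

/-- `ε_1(a,b,c) := b + max(c−a, 0)`. -/
def eps1 (x : T3) : ℕ := x.2.1 + (x.2.2 - x.1)

/-- `ε_2(a,b,c) := a`. -/
def eps2 (x : T3) : ℕ := x.1

/-- `ε*_1(a,b,c) := c`. -/
def epsStar1 (x : T3) : ℕ := x.2.2

/-- `ε*_2(a,b,c) := b + max(a−c, 0)`. -/
def epsStar2 (x : T3) : ℕ := x.2.1 + (x.1 - x.2.2)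

/-- Iteration of a partially defined operator: `iterO f k x` is the result of applying
`f` to `x` `k` times in succession, defined exactly when every intermediate result is
defined. -/
def iterO (f : T3 → Option T3) : ℕ → T3 → Option T3
  | 0, x => some x
  | k + 1, x => (f x).bind (iterO f k)

/-- `φ*_1(a,b,c) := a − b − c` (as an integer). -/
def phiStar1 (x : T3) : ℤ := (x.1 : ℤ) - x.2.1 - x.2.2

/-- `φ*_2(a,b,c) := max(a−c, 0) + c − 2a` (as an integer). -/
def phiStar2 (x : T3) : ℤ := max ((x.1 : ℤ) - x.2.2) 0 + x.2.2 - 2 * x.1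

/-- The Saito reflection `S_1(x) := f̃_1^{φ*_1(x)}(ẽ*_1^{ε*_1(x)}(x))`, defined when all
intermediate applications are defined (in particular the exponent `φ*_1(x)` must be
nonnegative). -/
def saito1 (x : T3) : Option T3 :=
  if 0 ≤ phiStar1 x then (iterO estar1 (epsStar1 x) x).map (ftil1^[(phiStar1 x).toNat])
  else none

/-- The Saito reflection `S_2(x) := f̃_2^{φ*_2(x)}(ẽ*_2^{ε*_2(x)}(x))`, defined when all
intermediate applications are defined. -/
def saito2 (x : T3) : Option T3 :=
  if 0 ≤ phiStar2 x then (iterO estar2 (epsStar2 x) x).map (ftil2^[(phiStar2 x).toNat])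
  else none

/-- The modified Saito reflection `T̃_1(x) := S_1(ẽ_1^{ε_1(x)}(x))`. -/
def tsaito1 (x : T3) : Option T3 := (iterO etil1 (eps1 x) x).bind saito1

/-- The modified Saito reflection `T̃_2(x) := S_2(ẽ_2^{ε_2(x)}(x))`. -/
def tsaito2 (x : T3) : Option T3 := (iterO etil2 (eps2 x) x).bind saito2

lemma iterO_add (f : T3 → Option T3) (m n : ℕ) (x : T3) :
    iterO f (m + n) x = (iterO f m x).bind (iterO f n) := by
  induction m generalizing x with
  | zero => simp [iterO]
  | succ m ih =>
    rw [show m + 1 + n = (m + n) + 1 from by omega]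
    show (f x).bind (iterO f (m + n)) = ((f x).bind (iterO f m)).bind (iterO f n)
    cases f x with
    | none => rfl
    | some y => simpa using ih y

lemma e1_down (n a b : ℕ) : iterO etil1 n (a, b, a + n) = some (a, b, a) := by
  induction n with
  | zero => rfl
  | succ n ih =>
    show (etil1 (a, b, a + (n+1))).bind (iterO etil1 n) = _
    rw [show etil1 (a, b, a + (n+1)) = some (a, b, a + n) from by
      simp only [etil1, if_pos (show a < a + (n+1) by omega)]
      congr 2]
    simpa using ih

lemma e1_up (n a c : ℕ) (h : c ≤ a) : iterO etil1 n (a, n, c) = some (a + n, 0, c) := by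
  induction n generalizing a with
  | zero => rfl
  | succ n ih =>
    show (etil1 (a, n + 1, c)).bind (iterO etil1 n) = _
    rw [show etil1 (a, n + 1, c) = some (a + 1, n, c) from by
      simp [etil1]; omega]
    rw [show (some (a + 1, n, c)).bind (iterO etil1 n) = iterO etil1 n (a+1, n, c) from rfl,
      ih (a + 1) (by omega)]
    simp only [Option.some.injEq, Prod.mk.injEq, and_true, true_and, and_self, eq_self_iff_true]
    omega

lemma es1_down (n a b : ℕ) : iterO estar1 n (a, b, n) = some (a, b, 0) := by
  induction n with
  | zero => rfl
  | succ n ih =>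
    show (estar1 (a, b, n + 1)).bind (iterO estar1 n) = _
    rw [show estar1 (a, b, n + 1) = some (a, b, n) from by simp [estar1]]
    simpa using ih

lemma f1_iter (t A B : ℕ) (h : t ≤ A) : ftil1^[t] (A, B, 0) = (A - t, B + t, 0) := by
  induction t with
  | zero => simp
  | succ t ih =>
    rw [Function.iterate_succ_apply', ih (by omega)]
    rw [show ftil1 (A - t, B + t, 0) = (A - t - 1, B + t + 1, 0) from by
      simp only [ftil1]
      rw [if_neg (by omega)]]
    simp only [Prod.mk.injEq, and_true, true_and]
    omega

lemma fs1_iter (m : ℕ) (p : T3) : fstar1^[m] p = (p.1, p.2.1, p.2.2 + m) := by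
  induction m with
  | zero => rfl
  | succ m ih => rw [Function.iterate_succ_apply', ih]; simp [fstar1]; omega

lemma saito1_eq (A m : ℕ) (h : m ≤ A) : saito1 (A, 0, m) = some (m, A - m, 0) := by
  unfold saito1
  have hphi : phiStar1 (A, 0, m) = (A : ℤ) - m := by simp [phiStar1]
  rw [hphi, if_pos (by omega)]
  show (iterO estar1 m (A, 0, m)).map _ = _
  rw [es1_down, Option.map_some]
  rw [show ((A : ℤ) - m).toNat = A - m from by omega]
  rw [f1_iter _ _ _ (by omega)]
  simp only [Option.some.injEq, Prod.mk.injEq, zero_add, and_true, true_and]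
  omega

lemma tsaito1_eq (a b c : ℕ) : tsaito1 (a, b, c) = some (min a c, b + (a - c), 0) := by
  have step1 : iterO etil1 (eps1 (a, b, c)) (a, b, c) = some (a + b, 0, min a c) := by
    show iterO etil1 (b + (c - a)) (a, b, c) = _
    rcases le_or_gt a c with h | h
    · rw [add_comm b (c - a), iterO_add,
        show (a, b, c) = (a, b, a + (c - a)) from by simp only [Prod.mk.injEq, and_true, true_and]; omega,
        e1_down]
      rw [show (some (a, b, a)).bind (iterO etil1 b) = iterO etil1 b (a, b, a) from rfl,
        e1_up b a a le_rfl]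
      simp only [Option.some.injEq, Prod.mk.injEq, and_true, true_and, and_self, eq_self_iff_true]
      omega
    · rw [show b + (c - a) = b from by omega, e1_up b a c (by omega)]
      simp only [Option.some.injEq, Prod.mk.injEq, and_true, true_and, and_self, eq_self_iff_true]
      omega
  unfold tsaito1
  rw [step1]
  show saito1 (a + b, 0, min a c) = _
  rw [saito1_eq _ _ (le_trans (min_le_left a c) (by omega))]
  simp only [Option.some.injEq, Prod.mk.injEq, and_true, true_and, and_self, eq_self_iff_true]
  omega

/-- Let `x = (x_k)_{k∈ℤ}` be an element of the extended crystal `B̂`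
(a finitely supported sequence in `ℕ³`, `x_k = (a_k, b_k, c_k)`).  Then for every `k`,
`(R_1(x))_k = f̃*_1^{ε_1(x_{k−1})}(T̃_1(x_k))
            = (min(a_k, c_k), b_k + max(a_k − c_k, 0), b_{k−1} + max(c_{k−1} − a_{k−1}, 0))`. -/
theorem stmt_16 (x : ℤ → T3) (hx : {k : ℤ | x k ≠ (0, 0, 0)}.Finite) (k : ℤ) :
    (tsaito1 (x k)).map (fstar1^[eps1 (x (k - 1))]) =
      some (min (x k).1 (x k).2.2,
        (x k).2.1 + ((x k).1 - (x k).2.2),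
        (x (k - 1)).2.1 + ((x (k - 1)).2.2 - (x (k - 1)).1)) := by
  rw [show tsaito1 (x k) = some (min (x k).1 (x k).2.2, (x k).2.1 + ((x k).1 - (x k).2.2), 0)
    from tsaito1_eq (x k).1 (x k).2.1 (x k).2.2, Option.map_some, fs1_iter]
  simp [eps1]
end

section
/- Let x = (x_k)_{k∈ℤ} ∈ B̂ with x_k = (a_k, b_k, c_k). Then for every k ∈ ℤ, (R_2(x))_k = (a_{k−1} + c_k − min(a_{k−1}, b_k), min(a_{k−1}, b_k), b_k + c_k − min(a_{k−1}, b_k)). -/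
lemma etil2_iter (a b c : ℕ) : iterO etil2 a (a, b, c) = some (0, b, c) := by
  induction a with
  | zero => rfl
  | succ a ih => simpa [iterO, etil2] using ih

lemma estar2_iter (b : ℕ) : ∀ c, iterO estar2 b (0, b, c) = some (0, 0, c + b) := by
  induction b with
  | zero => intro c; rfl
  | succ b ih =>
    intro c
    have : (c + 1) + b = c + (b + 1) := by omega
    simpa [iterO, estar2, this] using ih (c + 1)

lemma ftil2_iter (n : ℕ) : ∀ a b c : ℕ, ftil2^[n] (a, b, c) = (a + n, b, c) := by
  induction n with
  | zero => intro a b c; rfl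
  | succ n ih =>
    intro a b c
    rw [Function.iterate_succ_apply]
    show ftil2^[n] (a + 1, b, c) = _
    rw [ih]
    simp [Nat.add_assoc, Nat.add_comm 1 n]

lemma tsaito2_eq (a b c : ℕ) : tsaito2 (a, b, c) = some (c, 0, c + b) := by
  have h1 : iterO etil2 (eps2 (a, b, c)) (a, b, c) = some (0, b, c) := etil2_iter a b c
  rw [tsaito2, h1, Option.bind_some, saito2]
  have hphi : phiStar2 ((0 : ℕ), b, c) = (c : ℤ) := by
    simp [phiStar2]
  have heps : epsStar2 ((0 : ℕ), b, c) = b := by simp [epsStar2]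
  rw [hphi, heps, if_pos (Int.ofNat_nonneg c)]
  rw [estar2_iter b c]
  simp [ftil2_iter]

lemma fstar2_iter_hi (n : ℕ) : ∀ a b c : ℕ, c ≤ a → fstar2^[n] (a, b, c) = (a + n, b, c) := by
  induction n with
  | zero => intro a b c _; rfl
  | succ n ih =>
    intro a b c h
    rw [Function.iterate_succ_apply]
    have : fstar2 (a, b, c) = (a + 1, b, c) := by simp [fstar2, h]
    rw [this, ih (a + 1) b c (by omega)]
    simp [Nat.add_assoc, Nat.add_comm 1 n]

lemma fstar2_iter_lo (n : ℕ) :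
    ∀ m j c : ℕ, n ≤ m → fstar2^[n] (c, j, c + m) = (c, j + n, c + m - n) := by
  induction n with
  | zero => intro m j c _; rfl
  | succ n ih =>
    intro m j c h
    rw [Function.iterate_succ_apply]
    have hstep : fstar2 (c, j, c + m) = (c, j + 1, c + m - 1) := by
      have : ¬ (c + m ≤ c) := by omega
      simp [fstar2, this]
    have hm : c + m - 1 = c + (m - 1) := by omega
    rw [hstep, hm, ih (m - 1) (j + 1) c (by omega)]
    refine Prod.ext rfl (Prod.ext ?_ ?_) <;> simp <;> omega

/-- Let `x = (x_k)_{k∈ℤ}` be an element of the extended crystal `B̂`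
(a finitely supported sequence in `ℕ³`, `x_k = (a_k, b_k, c_k)`).  Then for every `k`,
`(R_2(x))_k = f̃*_2^{ε_2(x_{k−1})}(T̃_2(x_k))
            = (a_{k−1} + c_k − min(a_{k−1}, b_k), min(a_{k−1}, b_k),
               b_k + c_k − min(a_{k−1}, b_k))`. -/
theorem stmt_17 (x : ℤ → T3) (hx : {k : ℤ | x k ≠ (0, 0, 0)}.Finite) (k : ℤ) :
    (tsaito2 (x k)).map (fstar2^[eps2 (x (k - 1))]) =
      some ((x (k - 1)).1 + (x k).2.2 - min (x (k - 1)).1 (x k).2.1,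
        min (x (k - 1)).1 (x k).2.1,
        (x k).2.1 + (x k).2.2 - min (x (k - 1)).1 (x k).2.1) := by
  generalize x (k - 1) = p
  generalize x k = q
  obtain ⟨a', b', c'⟩ := p
  obtain ⟨a, b, c⟩ := q
  rw [tsaito2_eq]
  show some (fstar2^[a'] (c, 0, c + b)) = _
  simp only
  rcases le_or_gt a' b with h | h
  · rw [fstar2_iter_lo a' b 0 c h]
    simp only [Option.some.injEq, Prod.mk.injEq]
    refine ⟨?_, ?_, ?_⟩ <;> omega
  · conv_lhs => rw [show a' = (a' - b) + b from by omega]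
    rw [Function.iterate_add_apply, fstar2_iter_lo b b 0 c le_rfl,
      show c + b - b = c from by omega, fstar2_iter_hi (a' - b) c (0 + b) c le_rfl]
    simp only [Option.some.injEq, Prod.mk.injEq]
    refine ⟨?_, ?_, ?_⟩ <;> omega
end
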